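/- Let k be a field of characteristic zero, m ≥ 2, n = 2m-1, and D' the derivation on k[x_1,…,x_n] with D'(x_j) = (j-1)·x_{j-1} for j ≥ 2 and D'(x_1) = 0. Define f = (1/2)·∑_{i=1}^{2m-1} (-1)^{i-1}·C(2m-2, i-1)·x_i·x_{2m-i}. Then D'(f) = 0. -/

import Mathlib

open MvPolynomial
set_option maxHeartbeats 1000000

noncomputable def Gaux (k : Type*) [Field k] (m : ℕ) (hm : 2 ≤ m) (j : ℕ) :
    MvPolynomial (Fin (2*m-1)) k :=
  ((-1:k) ^ j * (Nat.choose (2*m-2) j : k) * (j : k)) •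
    (X (⟨min (j-1) (2*m-2), by omega⟩ : Fin (2*m-1)) *
     X (⟨2*m-2-j, by omega⟩ : Fin (2*m-1)))

lemma key_smul (k : Type*) [Field k] (m : ℕ) (a b : Fin (2*m-1)) (c : k) (t : ℕ) :
    c • ((X a : MvPolynomial (Fin (2*m-1)) k) • (t • (X b : MvPolynomial (Fin (2*m-1)) k)))
      = (c * t) • (X a * X b) := by
  rw [smul_eq_mul, nsmul_eq_mul, smul_eq_C_mul, smul_eq_C_mul, map_mul, map_natCast]
  ring

lemma step_lemma (k : Type*) [Field k] [CharZero k] (m : ℕ) (hm : 2 ≤ m)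
    (D' : Derivation k (MvPolynomial (Fin (2*m-1)) k) (MvPolynomial (Fin (2*m-1)) k))
    (hD' : ∀ j : Fin (2*m-1), D' (X j) =
      if h : 0 < (j : ℕ) then (j : ℕ) • X (⟨(j : ℕ) - 1, Nat.lt_of_le_of_lt (Nat.sub_le _ _) j.isLt⟩ : Fin (2*m-1)) else 0)
    (i : Fin (2*m-1)) :
    D' ((((-1:k) ^ (i : ℕ)) * (Nat.choose (2*m-2) (i : ℕ) : k)) • (X i * X i.rev))
      = Gaux k m hm (i : ℕ) - Gaux k m hm ((i : ℕ) + 1) := by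
  have hi : (i : ℕ) < 2*m-1 := i.isLt
  have hrev : (i.rev : ℕ) = 2*m-2-(i:ℕ) := by
    rw [Fin.val_rev]; omega
  have hirev : i.rev = (⟨2*m-2-(i:ℕ), by omega⟩ : Fin (2*m-1)) := Fin.ext hrev
  have hXrev : (X i.rev : MvPolynomial (Fin (2*m-1)) k)
      = X (⟨2*m-2-(i:ℕ), by omega⟩ : Fin (2*m-1)) := congrArg X hirev
  rw [Derivation.map_smul, Derivation.leibniz, hD', hD']
  simp only [hrev]
  by_cases h0 : (i:ℕ) = 0
  · have h1 : ¬ (0 < (i:ℕ)) := by omega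
    have h2 : 0 < 2*m-2-(i:ℕ) := by omega
    rw [dif_neg h1, dif_pos h2, smul_zero, add_zero, key_smul]
    have e0 : Gaux k m hm ((i:ℕ)) = 0 := by simp [Gaux, h0]
    rw [e0, zero_sub, Gaux]
    have eA : (⟨2*m-2-(i:ℕ)-1, by omega⟩ : Fin (2*m-1))
        = ⟨2*m-2-((i:ℕ)+1), by omega⟩ := Fin.mk_eq_mk.mpr (by omega)
    have eB : (⟨min ((i:ℕ)+1-1) (2*m-2), by omega⟩ : Fin (2*m-1)) = i :=
      Fin.ext (by show min ((i:ℕ)+1-1) (2*m-2) = (i:ℕ); omega)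
    rw [eA, eB]
    simp only [smul_eq_C_mul, map_mul, map_pow, map_neg, map_one, map_natCast]
    have hc : ((2*m-2).choose ((i:ℕ)+1) * ((i:ℕ)+1) : MvPolynomial (Fin (2*m-1)) k)
        = ((2*m-2).choose (i:ℕ) : MvPolynomial (Fin (2*m-1)) k)
          * ((2*m-2-(i:ℕ) : ℕ) : MvPolynomial (Fin (2*m-1)) k) := by
      exact_mod_cast congrArg (Nat.cast : ℕ → MvPolynomial (Fin (2*m-1)) k)
        (Nat.choose_succ_right_eq (2*m-2) (i:ℕ))
    push_cast at hc ⊢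
    linear_combination (-((-1:MvPolynomial (Fin (2*m-1)) k)) ^ (i:ℕ)
      * (X i * X (⟨2*m-2-((i:ℕ)+1), by omega⟩ : Fin (2*m-1)))) * hc
  · by_cases hlast : (i:ℕ) = 2*m-2
    · have h1 : 0 < (i:ℕ) := by omega
      have h2 : ¬ (0 < 2*m-2-(i:ℕ)) := by omega
      rw [dif_pos h1, dif_neg h2, smul_zero, zero_add, key_smul, hXrev]
      have eN : Gaux k m hm ((i:ℕ)+1) = 0 := by
        have : (2*m-2).choose ((i:ℕ)+1) = 0 := Nat.choose_eq_zero_of_lt (by omega)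
        simp [Gaux, this]
      rw [eN, sub_zero, Gaux]
      have eC : (⟨min ((i:ℕ)-1) (2*m-2), by omega⟩ : Fin (2*m-1))
          = ⟨(i:ℕ)-1, by omega⟩ := Fin.mk_eq_mk.mpr (by omega)
      rw [eC]
      simp only [smul_eq_C_mul, map_mul, map_pow, map_neg, map_one, map_natCast]
      ring
    · have h1 : 0 < (i:ℕ) := by omega
      have h2 : 0 < 2*m-2-(i:ℕ) := by omega
      rw [dif_pos h1, dif_pos h2, smul_add, key_smul, key_smul, hXrev, Gaux, Gaux]
      have eA : (⟨2*m-2-(i:ℕ)-1, by omega⟩ : Fin (2*m-1))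
          = ⟨2*m-2-((i:ℕ)+1), by omega⟩ := Fin.mk_eq_mk.mpr (by omega)
      have eB : (⟨min ((i:ℕ)+1-1) (2*m-2), by omega⟩ : Fin (2*m-1)) = i :=
        Fin.ext (by show min ((i:ℕ)+1-1) (2*m-2) = (i:ℕ); omega)
      have eC : (⟨min ((i:ℕ)-1) (2*m-2), by omega⟩ : Fin (2*m-1))
          = ⟨(i:ℕ)-1, by omega⟩ := Fin.mk_eq_mk.mpr (by omega)
      rw [eA, eB, eC]
      simp only [smul_eq_C_mul, map_mul, map_pow, map_neg, map_one, map_natCast]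
      have hc : ((2*m-2).choose ((i:ℕ)+1) * ((i:ℕ)+1) : MvPolynomial (Fin (2*m-1)) k)
          = ((2*m-2).choose (i:ℕ) : MvPolynomial (Fin (2*m-1)) k)
            * ((2*m-2-(i:ℕ) : ℕ) : MvPolynomial (Fin (2*m-1)) k) := by
        exact_mod_cast congrArg (Nat.cast : ℕ → MvPolynomial (Fin (2*m-1)) k)
          (Nat.choose_succ_right_eq (2*m-2) (i:ℕ))
      push_cast at hc ⊢
      linear_combination (-((-1:MvPolynomial (Fin (2*m-1)) k)) ^ (i:ℕ)
        * (X i * X (⟨2*m-2-((i:ℕ)+1), by omega⟩ : Fin (2*m-1)))) * hc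

theorem D'_kills_f (k : Type*) [Field k] [CharZero k] (m : ℕ) (hm : 2 ≤ m)
    (D' : Derivation k (MvPolynomial (Fin (2*m-1)) k) (MvPolynomial (Fin (2*m-1)) k))
    (hD' : ∀ j : Fin (2*m-1), D' (X j) =
      if h : 0 < (j : ℕ) then (j : ℕ) • X (⟨(j : ℕ) - 1, by omega⟩ : Fin (2*m-1)) else 0)
    (f : MvPolynomial (Fin (2*m-1)) k)
    (hf : f = (2:k)⁻¹ • ∑ i : Fin (2*m-1),
      (((-1:k) ^ (i : ℕ)) * (Nat.choose (2*m-2) (i : ℕ) : k)) • (X i * X i.rev)) :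
    D' f = 0 := by
  rw [hf, Derivation.map_smul, map_sum]
  rw [Finset.sum_congr rfl (fun i _ => step_lemma k m hm D' hD' i)]
  have hsum : ∑ i : Fin (2*m-1), (Gaux k m hm (i:ℕ) - Gaux k m hm ((i:ℕ)+1))
      = ∑ i ∈ Finset.range (2*m-1), (Gaux k m hm i - Gaux k m hm (i+1)) :=
    Fin.sum_univ_eq_sum_range (fun j => Gaux k m hm j - Gaux k m hm (j+1)) (2*m-1)
  rw [hsum, Finset.sum_range_sub' (Gaux k m hm)]
  have e0 : Gaux k m hm 0 = 0 := by simp [Gaux]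
  have eN : Gaux k m hm (2*m-1) = 0 := by
    have : (2*m-2).choose (2*m-1) = 0 := Nat.choose_eq_zero_of_lt (by omega)
    simp [Gaux, this]
  rw [e0, eN, sub_zero, smul_zero]
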